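/- Let E = ℝⁿ (Euclidean space of dimension n), let Σ be a differentiable manifold of dimension n − 1, and let f : Σ → E be a differentiable immersion (a hypersurface). Let W ⊆ E be a nonempty proper affine subspace with direction D and nearest-point projection π_W, and assume f(Σ) ∩ W = ∅. Assume property (C): for every q ∈ Σ and every tangent vector v in the image of df_q that is orthogonal to D, there exists η ∈ E with ⟪η, v⟫ = 0 such that the line {f(q) + tη : t ∈ ℝ} intersects W. Then π_W ∘ f is a submersion: for every q ∈ Σ, the orthogonal projection onto D maps the image of df_q onto all of D. (This is Proposition 2.8 of the paper in the Euclidean case c = 0.) -/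

import Mathlib

open scoped Manifold RealInnerProductSpace

/-- Proposition 2.8 of the paper in the Euclidean case `c = 0`: for a hypersurface
`f : Σ^{n-1} → ℝⁿ` disjoint from a proper nonempty affine subspace `W`, property (C)
(every tangent vector orthogonal to the direction `D` of `W` admits an orthogonal
line through the foot point meeting `W`) implies that `π_W ∘ f` is a submersion, i.e.
the orthogonal projection onto `D` maps the image of `df_q` onto all of `D`. -/
theorem stmt_8 {n : ℕ}
    {M : Type*} [TopologicalSpace M]
    [ChartedSpace (EuclideanSpace ℝ (Fin (n - 1))) M]
    (f : M → EuclideanSpace ℝ (Fin n))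
    (hf : MDifferentiable (𝓡 (n - 1)) (𝓡 n) f)
    (himm : ∀ q : M, Function.Injective (mfderiv (𝓡 (n - 1)) (𝓡 n) f q))
    (W : AffineSubspace ℝ (EuclideanSpace ℝ (Fin n)))
    (hWne : (W : Set (EuclideanSpace ℝ (Fin n))).Nonempty) (hWproper : W ≠ ⊤)
    (hdisj : ∀ q : M, f q ∉ W)
    (hC : ∀ (q : M) (v : EuclideanSpace ℝ (Fin n)),
      (∃ w : TangentSpace (𝓡 (n - 1)) q, (mfderiv (𝓡 (n - 1)) (𝓡 n) f q w : EuclideanSpace ℝ (Fin n)) = v) →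
      (∀ d ∈ W.direction, ⟪v, d⟫ = 0) →
      ∃ η : EuclideanSpace ℝ (Fin n), ⟪η, v⟫ = 0 ∧ ∃ t : ℝ, f q + t • η ∈ W) :
    ∀ (q : M) (d : W.direction), ∃ v : TangentSpace (𝓡 (n - 1)) q,
      Submodule.orthogonalProjection W.direction
        (mfderiv (𝓡 (n - 1)) (𝓡 n) f q v : EuclideanSpace ℝ (Fin n)) = d := by
  intro q d
  set L := mfderiv (𝓡 (n - 1)) (𝓡 n) f q with hLdef
  let Lm : TangentSpace (𝓡 (n-1)) q →ₗ[ℝ] EuclideanSpace ℝ (Fin n) :=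
    (L : TangentSpace (𝓡 (n-1)) q →L[ℝ] EuclideanSpace ℝ (Fin n)).toLinearMap
  let T : Submodule ℝ (EuclideanSpace ℝ (Fin n)) := LinearMap.range Lm
  let π : EuclideanSpace ℝ (Fin n) →ₗ[ℝ] EuclideanSpace ℝ (Fin n) :=
    W.direction.subtype.comp (Submodule.orthogonalProjection W.direction).toLinearMap
  let P : Submodule ℝ (EuclideanSpace ℝ (Fin n)) := T.map π
  have hPD : P ≤ W.direction := by
    rintro x ⟨t, _, rfl⟩
    exact (Submodule.orthogonalProjection W.direction t).2
  have hinj : Function.Injective Lm := himm q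
  have hTrank : Module.finrank ℝ T = n - 1 :=
    (LinearMap.finrank_range_of_inj hinj).trans finrank_euclideanSpace_fin
  have hP : P = W.direction := by
    by_contra hne
    have hbot : Pᗮ ⊓ W.direction ≠ ⊥ := by
      intro h
      apply hne
      have h2 := Submodule.sup_orthogonal_inf_of_hasOrthogonalProjection hPD
      rwa [h, sup_bot_eq] at h2
    obtain ⟨d₀, hd₀mem, hd₀ne⟩ := Submodule.exists_mem_ne_zero_of_ne_bot hbot
    obtain ⟨hd₀P, hd₀D⟩ := hd₀mem
    -- d₀ is orthogonal to T
    have hd₀T : ∀ x ∈ T, ⟪d₀, x⟫ = 0 := by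
      intro x hx
      have h1 : x - π x ∈ W.directionᗮ := Submodule.sub_starProjection_mem_orthogonal (K := W.direction) x
      have h2 : ⟪d₀, x - π x⟫ = 0 := h1 d₀ hd₀D
      have h3 : ⟪π x, d₀⟫ = 0 := hd₀P (π x) (Submodule.mem_map_of_mem hx)
      have h4 : ⟪d₀, π x⟫ = 0 := by rwa [real_inner_comm]
      have h5 : ⟪d₀, x - π x + π x⟫ = 0 := by rw [inner_add_right, h2, h4, add_zero]
      simpa using h5
    have hT : T = (ℝ ∙ d₀)ᗮ := by
      apply Submodule.eq_of_le_of_finrank_eq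
      · intro x hx
        rw [Submodule.mem_orthogonal_singleton_iff_inner_right]
        exact hd₀T x hx
      · rw [hTrank]
        have h5 : Module.finrank ℝ (ℝ ∙ d₀) + Module.finrank ℝ
            ((ℝ ∙ d₀)ᗮ : Submodule ℝ (EuclideanSpace ℝ (Fin n))) = n := by
          rw [Submodule.finrank_add_finrank_orthogonal]
          exact finrank_euclideanSpace_fin
        rw [finrank_span_singleton hd₀ne] at h5
        omega
    -- the foot point
    obtain ⟨w₀, hw₀⟩ := hWne
    set u : EuclideanSpace ℝ (Fin n) := (f q - w₀) - π (f q - w₀) with hu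
    have huD : u ∈ W.directionᗮ := Submodule.sub_starProjection_mem_orthogonal (K := W.direction) (f q - w₀)
    have hw₁ : w₀ + π (f q - w₀) ∈ W := by
      have := AffineSubspace.vadd_mem_of_mem_direction
        (show π (f q - w₀) ∈ W.direction from (Submodule.orthogonalProjection W.direction (f q - w₀)).2) hw₀
      simpa [vadd_eq_add, add_comm] using this
    have huT : u ∈ T := by
      rw [hT, Submodule.mem_orthogonal_singleton_iff_inner_right]
      exact huD d₀ hd₀D
    obtain ⟨vu, hvu⟩ := huT
    obtain ⟨η, hη, t, hw⟩ := hC q u ⟨vu, hvu⟩ (fun e he => by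
      have := huD e he; rwa [real_inner_comm] at this)
    -- derive u = 0
    have hdir : (f q + t • η) - (w₀ + π (f q - w₀)) ∈ W.direction := by
      have := AffineSubspace.vsub_mem_direction hw hw₁
      simpa [vsub_eq_sub] using this
    have h6 : ⟪u, (f q + t • η) - (w₀ + π (f q - w₀))⟫ = 0 := by
      have := huD _ hdir
      rwa [real_inner_comm] at this
    have h7 : ⟪u, η⟫ = 0 := by rwa [real_inner_comm] at hη
    have h8 : ⟪u, u⟫ = 0 := by
      have heq : u = ((f q + t • η) - (w₀ + π (f q - w₀))) - t • η := by
        rw [hu]; abel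
      calc ⟪u, u⟫ = ⟪u, ((f q + t • η) - (w₀ + π (f q - w₀))) - t • η⟫ := by rw [← heq]
        _ = ⟪u, (f q + t • η) - (w₀ + π (f q - w₀))⟫ - t * ⟪u, η⟫ := by
            rw [inner_sub_right, real_inner_smul_right]
        _ = 0 := by rw [h6, h7]; ring
    have h9 : u = 0 := by
      rwa [real_inner_self_eq_norm_sq, pow_eq_zero_iff (by norm_num), norm_eq_zero] at h8
    have hfqW : f q ∈ W := by
      have hfq : f q = w₀ + π (f q - w₀) := by
        rw [hu] at h9
        have h10 : f q - w₀ - π (f q - w₀) = 0 := h9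
        have := sub_eq_zero.mp h10
        linear_combination (norm := abel_nf) this
      rw [hfq]; exact hw₁
    exact hdisj q hfqW
  -- conclude
  have hd : (d : EuclideanSpace ℝ (Fin n)) ∈ P := by rw [hP]; exact d.2
  obtain ⟨x, hxT, hxd⟩ := hd
  obtain ⟨v, hv⟩ := hxT
  refine ⟨v, Subtype.ext ?_⟩
  have hfin : π (Lm v) = (d : EuclideanSpace ℝ (Fin n)) := by rw [hv]; exact hxd
  exact hfin
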